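/- Reorganization of the labelled-tree sum into planar rooted trees: Σ_{n≥1} (1/n!) Σ_{τ ∈ T⁰ₙ} Σ_{(γ₁,...,γₙ)∈Pⁿ} ∏_{{i,j}∈E_τ} F(γᵢ,γⱼ) ρ_{γ₁}···ρ_{γₙ} = Σ_{t ∈ 𝕋⁰, t ≠ root-only} ∏_{v⪰root} (1/s_v!) ∏_{i=1}^{s_v} [Σ_{γ_{vⁱ}∈P} F(γ_v, γ_{vⁱ}) ρ_{γ_{vⁱ}}], as an identity of sums of nonnegative terms (both sides possibly +∞), for any F : P×P → [0,∞], ρ : P → [0,∞), and fixed γ₀ assigned to the root. -/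

import Mathlib

open scoped BigOperators ENNReal NNReal
noncomputable section

/-- Planar rooted trees: a root together with an ordered (finite) list of subtrees. -/
inductive PTree where
  | node : List PTree → PTree

/-- The weight of a planar rooted tree pinned at `γ`: each vertex contributes a factor
`1/s_v!` and, for each of its children, a factor `Σ_{γ'} F(γ_v,γ') ρ_{γ'} (…subtree…)`. -/
def treeW2 {P : Type*} (F : P → P → ℝ≥0∞) (ρ : P → ℝ≥0∞) : PTree → P → ℝ≥0∞
  | .node l, γ => ((l.length.factorial : ℝ≥0∞))⁻¹ *
      ∏ i : Fin l.length, ∑' γ' : P, F γ γ' * ρ γ' * treeW2 F ρ (l.get i) γ'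
decreasing_by
  simp_wf; have := List.sizeOf_lt_of_mem (l.getElem_mem i.isLt)
  simp [PTree.node.sizeOf_spec]; omega

section Aux
open Finset
open scoped Classical

/-- number of non-root vertices of a planar tree -/
def nvv : PTree → ℕ
  | .node l => ∑ i : Fin l.length, (nvv (l.get i) + 1)
decreasing_by
  simp_wf; have := List.sizeOf_lt_of_mem (l.getElem_mem i.isLt)
  simp [PTree.node.sizeOf_spec]; omega

lemma nvv_node (l : List PTree) : nvv (.node l) = ∑ i : Fin l.length, (nvv (l.get i) + 1) := by
  rw [nvv]

lemma nvv_eq_zero (t : PTree) : nvv t = 0 ↔ t = .node [] := by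
  obtain ⟨l⟩ := t
  rw [nvv_node]
  constructor
  · intro h
    rcases l with _ | ⟨c, l⟩
    · rfl
    · exfalso
      have h0 := Finset.sum_eq_zero_iff.mp h (⟨0, by simp⟩ : Fin (c :: l).length)
        (Finset.mem_univ _)
      omega
  · intro h
    cases h
    simp

/-- labelled rooted trees on `n+1` vertices, rooted at `0`, as parent maps -/
def Tr (n : ℕ) := {q : Fin (n + 1) → Fin (n + 1) // q 0 = 0 ∧ ∀ v, ∃ k, q^[k] v = 0}

instance (n : ℕ) : Finite (Tr n) := by unfold Tr; infer_instance
instance (n : ℕ) : Fintype (Tr n) := Fintype.ofFinite _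

variable {P : Type*} (F : P → P → ℝ≥0∞) (r : P → ℝ≥0∞)

def wV (n : ℕ) (γ : P) (τ : Tr n) : ℝ≥0∞ :=
  ∑' g : Fin n → P, ∏ v : Fin n,
    F ((Fin.cons γ g : Fin (n + 1) → P) (τ.1 v.succ))
        ((Fin.cons γ g : Fin (n + 1) → P) v.succ) * r (g v)

def A (n : ℕ) (γ : P) : ℝ≥0∞ := ∑' τ : Tr n, wV F r n γ τ

def Tt (n : ℕ) (γ : P) : ℝ≥0∞ := ∑' t : PTree, if nvv t = n then treeW2 F r t γ else 0

def Uu (n : ℕ) (γ : P) : ℝ≥0∞ := ∑' γ' : P, F γ γ' * r γ' * Tt F r n γ'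

def DD (n : ℕ) (γ : P) : ℝ≥0∞ := ∑' γ' : P, F γ γ' * r γ' * A F r n γ'


def gW (γ : P) (c : PTree) : ℝ≥0∞ := ∑' γ' : P, F γ γ' * r γ' * treeW2 F r c γ'

lemma nvv_ofFn {k : ℕ} (v : Fin k → PTree) :
    nvv (.node (List.ofFn v)) = ∑ i : Fin k, (nvv (v i) + 1) := by
  rw [nvv_node]
  apply Fintype.sum_equiv (finCongr (List.length_ofFn (f := v)))
  intro i
  simp only [List.get_ofFn, finCongr_apply]

lemma treeW2_ofFn {k : ℕ} (v : Fin k → PTree) (γ : P) :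
    treeW2 F r (.node (List.ofFn v)) γ
      = ((k.factorial : ℝ≥0∞))⁻¹ * ∏ i : Fin k, gW F r γ (v i) := by
  rw [treeW2]
  congr 1
  · rw [List.length_ofFn]
  · apply Fintype.prod_equiv (finCongr (List.length_ofFn (f := v)))
    intro i
    simp only [gW, List.get_ofFn, finCongr_apply]

def eqPT : ((k : ℕ) × (Fin k → PTree)) ≃ PTree :=
  List.equivSigmaTuple.symm.trans
    ⟨PTree.node, fun t => match t with | .node l => l, fun l => rfl,
      fun t => match t with | .node l => rfl⟩

lemma Tt_eq (n : ℕ) (γ : P) :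
    Tt F r n γ = ∑' k : ℕ, ∑' v : Fin k → PTree,
      (if (∑ i : Fin k, (nvv (v i) + 1)) = n
        then ((k.factorial : ℝ≥0∞))⁻¹ * ∏ i : Fin k, gW F r γ (v i) else 0) := by
  rw [Tt, ← Equiv.tsum_eq eqPT, ENNReal.tsum_sigma']
  apply tsum_congr; intro k; apply tsum_congr; intro v
  have he : eqPT ⟨k, v⟩ = PTree.node (List.ofFn v) := rfl
  rw [he, nvv_ofFn, treeW2_ofFn]

lemma tsum_gW_if (b : ℕ) (γ : P) :
    (∑' c : PTree, if nvv c = b then gW F r γ c else 0) = Uu F r b γ := by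
  rw [Uu]
  calc (∑' c : PTree, if nvv c = b then gW F r γ c else 0)
      = ∑' c : PTree, ∑' γ' : P,
          (if nvv c = b then F γ γ' * r γ' * treeW2 F r c γ' else 0) :=
        tsum_congr fun c => by by_cases h : nvv c = b <;> simp [h, gW]
    _ = ∑' γ' : P, ∑' c : PTree,
          (if nvv c = b then F γ γ' * r γ' * treeW2 F r c γ' else 0) := ENNReal.tsum_comm
    _ = ∑' γ' : P, F γ γ' * r γ' * Tt F r b γ' := by
        apply tsum_congr; intro γ'
        rw [Tt, ← ENNReal.tsum_mul_left]
        apply tsum_congr; intro c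
        by_cases h : nvv c = b <;> simp [h, mul_comm]

lemma ite_and_split (Pp Qq : Prop) [Decidable Pp] [Decidable Qq] (x y : ℝ≥0∞) :
    (if Pp ∧ Qq then x * y else 0) = (if Pp then x else 0) * (if Qq then y else 0) := by
  by_cases h1 : Pp <;> by_cases h2 : Qq <;> simp [h1, h2]

lemma ite_nat_add_split (X Y n : ℕ) (val : ℝ≥0∞) :
    (if X + Y = n then val else 0)
      = ∑ b ∈ range (n + 1), (if X = b ∧ Y = n - b then val else 0) := by
  by_cases h : X + Y = n
  · rw [if_pos h, Finset.sum_eq_single X]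
    · rw [if_pos ⟨rfl, by omega⟩]
    · intro b _ hb
      rw [if_neg]; rintro ⟨rfl, _⟩; exact hb rfl
    · intro hX
      exfalso; exact hX (Finset.mem_range.mpr (by omega))
  · rw [if_neg h, eq_comm]
    apply Finset.sum_eq_zero
    intro b hb
    rw [if_neg]
    rintro ⟨rfl, rfl⟩
    exact h (by have := Finset.mem_range.mp hb; omega)

lemma succ_mul_factorial_inv (k : ℕ) :
    ((k : ℝ≥0∞) + 1) * (((k + 1).factorial : ℝ≥0∞))⁻¹ = ((k.factorial : ℝ≥0∞))⁻¹ := by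
  have hne : ((k : ℝ≥0∞) + 1) ≠ 0 := by
    simp
  have hnt : ((k : ℝ≥0∞) + 1) ≠ ⊤ :=
    ENNReal.add_ne_top.mpr ⟨ENNReal.natCast_ne_top _, ENNReal.one_ne_top⟩
  have h1 : (((k + 1).factorial : ℝ≥0∞)) = ((k : ℝ≥0∞) + 1) * (k.factorial : ℝ≥0∞) := by
    rw [Nat.factorial_succ]; push_cast; ring
  rw [h1, ENNReal.mul_inv (Or.inl hne) (Or.inl hnt), ← mul_assoc,
    ENNReal.mul_inv_cancel hne hnt, one_mul]

lemma A_zero (γ : P) : A F r 0 γ = 1 := by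
  haveI : Subsingleton (Fin (0 + 1)) := ⟨fun a b => Fin.ext (by omega)⟩
  haveI : Subsingleton (Tr 0) := by unfold Tr; infer_instance
  have τ₀ : Tr 0 := ⟨fun _ => 0, rfl, fun v => ⟨0, Subsingleton.elim _ _⟩⟩
  have hg : ∀ τ : Tr 0, wV F r 0 γ τ = 1 := by
    intro τ
    rw [wV]
    rw [tsum_eq_single (fun x : Fin 0 => x.elim0)
      (fun b hb => absurd (Subsingleton.elim b _) hb)]
    simp
  rw [A, tsum_eq_single τ₀ (fun b hb => absurd (Subsingleton.elim b τ₀) hb), hg]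

lemma Tt_zero (γ : P) : Tt F r 0 γ = 1 := by
  rw [Tt, tsum_eq_single (PTree.node [])]
  · rw [if_pos ((nvv_eq_zero _).mpr rfl), treeW2]
    simp
  · intro t ht
    rw [if_neg (fun h0 => ht ((nvv_eq_zero t).mp h0))]

set_option maxHeartbeats 2000000 in
lemma P1 (n : ℕ) (γ : P) :
    ((n : ℝ≥0∞) + 1) * Tt F r (n + 1) γ
      = ∑ j ∈ range (n + 1), ((j : ℝ≥0∞) + 1) * Uu F r j γ * Tt F r (n - j) γ := by
  have step1 : ((n : ℝ≥0∞) + 1) * Tt F r (n + 1) γ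
      = ∑' k : ℕ, ∑ j : Fin k, ∑' v : Fin k → PTree,
          (if (∑ i : Fin k, (nvv (v i) + 1)) = n + 1
            then ((nvv (v j) + 1 : ℕ) : ℝ≥0∞) *
              (((k.factorial : ℝ≥0∞))⁻¹ * ∏ i : Fin k, gW F r γ (v i))
            else 0) := by
    rw [Tt_eq, ← ENNReal.tsum_mul_left]
    apply tsum_congr; intro k
    rw [← ENNReal.tsum_mul_left, ← Summable.tsum_finsetSum (fun j _ => ENNReal.summable)]
    apply tsum_congr; intro v
    by_cases h : (∑ i : Fin k, (nvv (v i) + 1)) = n + 1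
    · simp only [if_pos h]
      rw [← Finset.sum_mul, ← Nat.cast_sum, h]
      push_cast
      ring
    · simp [h]
  have step2 : ∀ (k : ℕ) (j : Fin (k + 1)),
      (∑' v : Fin (k + 1) → PTree,
        (if (∑ i : Fin (k + 1), (nvv (v i) + 1)) = n + 1
          then ((nvv (v j) + 1 : ℕ) : ℝ≥0∞) *
            ((((k + 1).factorial : ℝ≥0∞))⁻¹ * ∏ i : Fin (k + 1), gW F r γ (v i))
          else 0))
      = ∑' c : PTree, ∑' w : Fin k → PTree,
          (if (nvv c + 1) + (∑ i : Fin k, (nvv (w i) + 1)) = n + 1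
            then ((nvv c + 1 : ℕ) : ℝ≥0∞) *
              ((((k + 1).factorial : ℝ≥0∞))⁻¹ * (gW F r γ c * ∏ i : Fin k, gW F r γ (w i)))
            else 0) := by
    intro k j
    calc (∑' v : Fin (k + 1) → PTree,
        (if (∑ i : Fin (k + 1), (nvv (v i) + 1)) = n + 1
          then ((nvv (v j) + 1 : ℕ) : ℝ≥0∞) *
            ((((k + 1).factorial : ℝ≥0∞))⁻¹ * ∏ i : Fin (k + 1), gW F r γ (v i))
          else 0))
        = ∑' p : PTree × (Fin k → PTree),
            (if (∑ i : Fin (k + 1), (nvv ((Fin.insertNthEquiv (fun _ => PTree) j) p i) + 1)) = n + 1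
              then ((nvv ((Fin.insertNthEquiv (fun _ => PTree) j) p j) + 1 : ℕ) : ℝ≥0∞) *
                ((((k + 1).factorial : ℝ≥0∞))⁻¹ *
                  ∏ i : Fin (k + 1), gW F r γ ((Fin.insertNthEquiv (fun _ => PTree) j) p i))
              else 0) :=
          (Equiv.tsum_eq (Fin.insertNthEquiv (fun _ => PTree) j) _).symm
      _ = ∑' p : PTree × (Fin k → PTree),
            (if (nvv p.1 + 1) + (∑ i : Fin k, (nvv (p.2 i) + 1)) = n + 1
              then ((nvv p.1 + 1 : ℕ) : ℝ≥0∞) *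
                ((((k + 1).factorial : ℝ≥0∞))⁻¹ * (gW F r γ p.1 * ∏ i : Fin k, gW F r γ (p.2 i)))
              else 0) := by
          apply tsum_congr
          rintro ⟨c, w⟩
          have h1 : (Fin.insertNthEquiv (fun _ => PTree) j) (c, w) = j.insertNth c w := rfl
          rw [h1]
          have hs := Fin.sum_univ_succAbove
            (fun i => nvv ((j.insertNth c w : Fin (k + 1) → PTree) i) + 1) j
          have hp := Fin.prod_univ_succAbove
            (fun i => gW F r γ ((j.insertNth c w : Fin (k + 1) → PTree) i)) j
          simp only [Fin.insertNth_apply_same, Fin.insertNth_apply_succAbove] at hs hp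
          rw [hs, hp]
          simp only [Fin.insertNth_apply_same]
      _ = _ := ENNReal.tsum_prod (f := fun (c : PTree) (w : Fin k → PTree) =>
            (if (nvv c + 1) + (∑ i : Fin k, (nvv (w i) + 1)) = n + 1
              then ((nvv c + 1 : ℕ) : ℝ≥0∞) *
                ((((k + 1).factorial : ℝ≥0∞))⁻¹ * (gW F r γ c * ∏ i : Fin k, gW F r γ (w i)))
              else 0))
  have step3 : ∀ k : ℕ,
      ((k + 1 : ℕ) : ℝ≥0∞) * (∑' c : PTree, ∑' w : Fin k → PTree,
          (if (nvv c + 1) + (∑ i : Fin k, (nvv (w i) + 1)) = n + 1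
            then ((nvv c + 1 : ℕ) : ℝ≥0∞) *
              ((((k + 1).factorial : ℝ≥0∞))⁻¹ * (gW F r γ c * ∏ i : Fin k, gW F r γ (w i)))
            else 0))
      = ∑' c : PTree, ∑' w : Fin k → PTree,
          (if nvv c + (∑ i : Fin k, (nvv (w i) + 1)) = n
            then ((nvv c + 1 : ℕ) : ℝ≥0∞) *
              (((k.factorial : ℝ≥0∞))⁻¹ * (gW F r γ c * ∏ i : Fin k, gW F r γ (w i)))
            else 0) := by
    intro k
    rw [← ENNReal.tsum_mul_left]; apply tsum_congr; intro c
    rw [← ENNReal.tsum_mul_left]; apply tsum_congr; intro w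
    by_cases h : nvv c + (∑ i : Fin k, (nvv (w i) + 1)) = n
    · rw [if_pos (by omega), if_pos h]
      have hcast : ((k + 1 : ℕ) : ℝ≥0∞) = (k : ℝ≥0∞) + 1 := by push_cast; ring
      rw [hcast, show ((k : ℝ≥0∞) + 1) * (((nvv c + 1 : ℕ) : ℝ≥0∞) *
          ((((k + 1).factorial : ℝ≥0∞))⁻¹ * (gW F r γ c * ∏ i : Fin k, gW F r γ (w i))))
        = ((nvv c + 1 : ℕ) : ℝ≥0∞) *
          ((((k : ℝ≥0∞) + 1) * (((k + 1).factorial : ℝ≥0∞))⁻¹) *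
            (gW F r γ c * ∏ i : Fin k, gW F r γ (w i))) from by ring,
        succ_mul_factorial_inv]
    · rw [if_neg (by omega), if_neg h, mul_zero]
  have step4 : ∀ (k : ℕ) (c : PTree) (w : Fin k → PTree),
      (if nvv c + (∑ i : Fin k, (nvv (w i) + 1)) = n
        then ((nvv c + 1 : ℕ) : ℝ≥0∞) *
          (((k.factorial : ℝ≥0∞))⁻¹ * (gW F r γ c * ∏ i : Fin k, gW F r γ (w i)))
        else 0)
      = ∑ b ∈ range (n + 1),
          (if nvv c = b then ((b : ℝ≥0∞) + 1) * gW F r γ c else 0) *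
          (if (∑ i : Fin k, (nvv (w i) + 1)) = n - b
            then ((k.factorial : ℝ≥0∞))⁻¹ * ∏ i : Fin k, gW F r γ (w i) else 0) := by
    intro k c w
    rw [ite_nat_add_split]
    apply Finset.sum_congr rfl
    intro b _
    rw [← ite_and_split]
    by_cases h : nvv c = b ∧ (∑ i : Fin k, (nvv (w i) + 1)) = n - b
    · rw [if_pos h, if_pos h]
      obtain ⟨h1, h2⟩ := h
      subst h1
      push_cast
      ring
    · rw [if_neg h, if_neg h]
  rw [step1, tsum_eq_zero_add' ENNReal.summable]
  rw [show (∑ j : Fin 0, ∑' v : Fin 0 → PTree,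
      (if (∑ i : Fin 0, (nvv (v i) + 1)) = n + 1
        then ((nvv (v j) + 1 : ℕ) : ℝ≥0∞) *
          (((Nat.factorial 0 : ℝ≥0∞))⁻¹ * ∏ i : Fin 0, gW F r γ (v i))
        else 0)) = 0 from by simp, zero_add]
  have hmain : ∀ k : ℕ,
      (∑ j : Fin (k + 1), ∑' v : Fin (k + 1) → PTree,
        (if (∑ i : Fin (k + 1), (nvv (v i) + 1)) = n + 1
          then ((nvv (v j) + 1 : ℕ) : ℝ≥0∞) *
            ((((k + 1).factorial : ℝ≥0∞))⁻¹ * ∏ i : Fin (k + 1), gW F r γ (v i))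
          else 0))
      = ∑' c : PTree, ∑' w : Fin k → PTree, ∑ b ∈ range (n + 1),
          (if nvv c = b then ((b : ℝ≥0∞) + 1) * gW F r γ c else 0) *
          (if (∑ i : Fin k, (nvv (w i) + 1)) = n - b
            then ((k.factorial : ℝ≥0∞))⁻¹ * ∏ i : Fin k, gW F r γ (w i) else 0) := by
    intro k
    rw [Finset.sum_congr rfl (fun j _ => step2 k j), Finset.sum_const, Finset.card_univ,
      Fintype.card_fin, nsmul_eq_mul]
    rw [show ((k + 1 : ℕ) : ℝ≥0∞) = ((Nat.cast (k + 1) : ℝ≥0∞)) from by push_cast; ring]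
    rw [step3 k]
    exact tsum_congr fun c => tsum_congr fun w => step4 k c w
  rw [tsum_congr hmain]
  have hswap : (∑' k : ℕ, ∑' c : PTree, ∑' w : Fin k → PTree, ∑ b ∈ range (n + 1),
      (if nvv c = b then ((b : ℝ≥0∞) + 1) * gW F r γ c else 0) *
      (if (∑ i : Fin k, (nvv (w i) + 1)) = n - b
        then ((k.factorial : ℝ≥0∞))⁻¹ * ∏ i : Fin k, gW F r γ (w i) else 0))
      = ∑ b ∈ range (n + 1), ∑' k : ℕ, ∑' c : PTree, ∑' w : Fin k → PTree,
      (if nvv c = b then ((b : ℝ≥0∞) + 1) * gW F r γ c else 0) *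
      (if (∑ i : Fin k, (nvv (w i) + 1)) = n - b
        then ((k.factorial : ℝ≥0∞))⁻¹ * ∏ i : Fin k, gW F r γ (w i) else 0) := by
    rw [← Summable.tsum_finsetSum (fun b _ => ENNReal.summable)]
    apply tsum_congr; intro k
    rw [← Summable.tsum_finsetSum (fun b _ => ENNReal.summable)]
    apply tsum_congr; intro c
    rw [← Summable.tsum_finsetSum (fun b _ => ENNReal.summable)]
  rw [hswap]
  apply Finset.sum_congr rfl
  intro b _
  have hfac : ∀ k : ℕ, (∑' c : PTree, ∑' w : Fin k → PTree,
      (if nvv c = b then ((b : ℝ≥0∞) + 1) * gW F r γ c else 0) *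
      (if (∑ i : Fin k, (nvv (w i) + 1)) = n - b
        then ((k.factorial : ℝ≥0∞))⁻¹ * ∏ i : Fin k, gW F r γ (w i) else 0))
      = (∑' c : PTree, (if nvv c = b then ((b : ℝ≥0∞) + 1) * gW F r γ c else 0)) *
        (∑' w : Fin k → PTree, (if (∑ i : Fin k, (nvv (w i) + 1)) = n - b
          then ((k.factorial : ℝ≥0∞))⁻¹ * ∏ i : Fin k, gW F r γ (w i) else 0)) := by
    intro k
    rw [← ENNReal.tsum_mul_right]
    apply tsum_congr; intro c
    rw [ENNReal.tsum_mul_left]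
  rw [tsum_congr hfac, ENNReal.tsum_mul_left]
  have hX : (∑' c : PTree, (if nvv c = b then ((b : ℝ≥0∞) + 1) * gW F r γ c else 0))
      = ((b : ℝ≥0∞) + 1) * Uu F r b γ := by
    rw [← tsum_gW_if F r b γ, ← ENNReal.tsum_mul_left]
    apply tsum_congr; intro c
    by_cases h : nvv c = b <;> simp [h]
  rw [hX, ← Tt_eq]

section CutDefs
variable {n : ℕ}

/-- the last nonzero vertex on the path from vertex `1` to the root. -/
def cvert (τ : Tr (n + 1)) : Fin (n + 2) := τ.1^[Nat.find (τ.2.2 1) - 1] 1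

lemma fin_one_ne_zero' : (1 : Fin (n + 2)) ≠ 0 := by
  simp [Fin.ext_iff]

lemma find_pos (τ : Tr (n + 1)) : 0 < Nat.find (τ.2.2 1) := by
  apply Nat.pos_of_ne_zero
  intro h
  have hspec := Nat.find_spec (τ.2.2 1)
  rw [h] at hspec
  exact fin_one_ne_zero' hspec

lemma cvert_ne_zero (τ : Tr (n + 1)) : cvert τ ≠ 0 := by
  intro h
  have hpos := find_pos τ
  exact Nat.find_min (τ.2.2 1) (m := Nat.find (τ.2.2 1) - 1) (by omega) h

lemma q_cvert (τ : Tr (n + 1)) : τ.1 (cvert τ) = 0 := by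
  have h := Nat.find_spec (τ.2.2 1)
  have hpos := find_pos τ
  rw [show Nat.find (τ.2.2 1) = (Nat.find (τ.2.2 1) - 1) + 1 by omega,
    Function.iterate_succ_apply'] at h
  exact h

lemma cvert_unique (τ : Tr (n + 1)) (u : Fin (n + 2)) (horb : ∃ k, τ.1^[k] 1 = u)
    (hu0 : u ≠ 0) (huq : τ.1 u = 0) : u = cvert τ := by
  obtain ⟨k, hk⟩ := horb
  set k' := Nat.find (τ.2.2 1) - 1 with hk'def
  have hk' : τ.1^[k'] 1 = cvert τ := rfl
  rcases le_total k k' with h | h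
  · have h2 : cvert τ = τ.1^[k' - k] u := by
      rw [← hk', ← hk, ← Function.iterate_add_apply]
      congr 1
      omega
    rcases Nat.eq_zero_or_pos (k' - k) with h0 | h0
    · rw [h0] at h2
      simpa using h2.symm
    · exfalso
      apply cvert_ne_zero τ
      rw [h2, show k' - k = (k' - k - 1) + 1 by omega, Function.iterate_succ_apply, huq,
        Function.iterate_fixed τ.2.1]
  · have h2 : u = τ.1^[k - k'] (cvert τ) := by
      rw [← hk, ← hk', ← Function.iterate_add_apply]
      congr 1
      omega
    rcases Nat.eq_zero_or_pos (k - k') with h0 | h0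
    · rw [h0] at h2
      simpa using h2
    · exfalso
      apply hu0
      rw [h2, show k - k' = (k - k' - 1) + 1 by omega, Function.iterate_succ_apply, q_cvert τ,
        Function.iterate_fixed τ.2.1]

/-- the set of vertices in the root-child subtree containing vertex `1`. -/
def Sset (τ : Tr (n + 1)) : Finset (Fin (n + 2)) :=
  Finset.univ.filter (fun u => ∃ k, τ.1^[k] u = cvert τ)

lemma mem_Sset {τ : Tr (n + 1)} {u : Fin (n + 2)} :
    u ∈ Sset τ ↔ ∃ k, τ.1^[k] u = cvert τ := by simp [Sset]

lemma zero_not_mem_Sset (τ : Tr (n + 1)) : 0 ∉ Sset τ := by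
  rw [mem_Sset]
  rintro ⟨k, hk⟩
  exact cvert_ne_zero τ (by rw [← hk, Function.iterate_fixed τ.2.1])

lemma one_mem_Sset (τ : Tr (n + 1)) : 1 ∈ Sset τ :=
  mem_Sset.mpr ⟨Nat.find (τ.2.2 1) - 1, rfl⟩

lemma cvert_mem_Sset (τ : Tr (n + 1)) : cvert τ ∈ Sset τ := mem_Sset.mpr ⟨0, rfl⟩

lemma Sset_closure_in {τ : Tr (n + 1)} {u : Fin (n + 2)} (hu : u ∈ Sset τ)
    (hne : u ≠ cvert τ) : τ.1 u ∈ Sset τ := by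
  obtain ⟨k, hk⟩ := mem_Sset.mp hu
  have hkpos : k ≠ 0 := by rintro rfl; exact hne hk
  refine mem_Sset.mpr ⟨k - 1, ?_⟩
  rw [← Function.iterate_succ_apply]
  have hkk : (k - 1).succ = k := by omega
  rw [hkk, hk]

lemma Sset_closure_out {τ : Tr (n + 1)} {u : Fin (n + 2)} (hu : u ∉ Sset τ) :
    τ.1 u ∉ Sset τ := by
  intro h
  apply hu
  obtain ⟨k, hk⟩ := mem_Sset.mp h
  exact mem_Sset.mpr ⟨k + 1, by rw [Function.iterate_succ_apply]; exact hk⟩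

end CutDefs

section GlueSec
variable {n j : ℕ} {S : Finset (Fin (n + 2))} {c : Fin (n + 2)}
variable (eS : Fin (j + 1) ≃ {x : Fin (n + 2) // x ∈ S})
variable (fC : Fin (n - j + 1) ≃ {x : Fin (n + 2) // x ∈ Sᶜ})

/-- glue an inside tree (on `S`, rooted at `c`) and an outside tree into a parent map. -/
def glueq (tin : Tr j) (tout : Tr (n - j)) : Fin (n + 2) → Fin (n + 2) := fun u =>
  if hu : u ∈ S then
    (if eS.symm ⟨u, hu⟩ = 0 then 0 else (eS (tin.1 (eS.symm ⟨u, hu⟩)) : Fin (n + 2)))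
  else (fC (tout.1 (fC.symm ⟨u, Finset.mem_compl.mpr hu⟩)) : Fin (n + 2))

lemma glueq_inS (tin : Tr j) (tout : Tr (n - j)) (w : Fin (j + 1)) (hw : w ≠ 0) :
    glueq eS fC tin tout (eS w) = (eS (tin.1 w) : Fin (n + 2)) := by
  have hmem : ((eS w : Fin (n + 2))) ∈ S := (eS w).2
  simp only [glueq]
  rw [dif_pos hmem]
  have hsym : eS.symm ⟨(eS w : Fin (n + 2)), hmem⟩ = w := by
    rw [show (⟨(eS w : Fin (n + 2)), hmem⟩ : {x : Fin (n + 2) // x ∈ S}) = eS w from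
      Subtype.ext rfl, Equiv.symm_apply_apply]
  rw [hsym, if_neg hw]

lemma glueq_c (tin : Tr j) (tout : Tr (n - j)) (heS0 : ((eS 0 : Fin (n + 2))) = c) :
    glueq eS fC tin tout c = 0 := by
  have hmem : c ∈ S := heS0 ▸ (eS 0).2
  simp only [glueq]
  rw [dif_pos hmem]
  have hsym : eS.symm ⟨c, hmem⟩ = 0 := by
    rw [show (⟨c, hmem⟩ : {x : Fin (n + 2) // x ∈ S}) = eS 0 from Subtype.ext heS0.symm,
      Equiv.symm_apply_apply]
  rw [hsym, if_pos rfl]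

lemma glueq_outS (tin : Tr j) (tout : Tr (n - j)) (w : Fin (n - j + 1)) :
    glueq eS fC tin tout (fC w) = (fC (tout.1 w) : Fin (n + 2)) := by
  have hmem : ((fC w : Fin (n + 2))) ∉ S := Finset.mem_compl.mp (fC w).2
  simp only [glueq]
  rw [dif_neg hmem]
  congr 2
  rw [show (⟨(fC w : Fin (n + 2)), Finset.mem_compl.mpr hmem⟩ : {x : Fin (n + 2) // x ∈ Sᶜ})
    = fC w from Subtype.ext rfl, Equiv.symm_apply_apply]

lemma glueq_zero (tin : Tr j) (tout : Tr (n - j)) (hfC0 : ((fC 0 : Fin (n + 2))) = 0) :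
    glueq eS fC tin tout 0 = 0 := by
  have h := glueq_outS eS fC tin tout 0
  rw [tout.2.1, hfC0] at h
  exact h

lemma glue_reach_in (tin : Tr j) (tout : Tr (n - j)) (heS0 : ((eS 0 : Fin (n + 2))) = c) :
    ∀ (m : ℕ) (w : Fin (j + 1)), tin.1^[m] w = 0 →
      ∃ k, (glueq eS fC tin tout)^[k] ((eS w : Fin (n + 2))) = c := by
  intro m
  induction m with
  | zero =>
    intro w hw
    simp only [Function.iterate_zero_apply] at hw
    exact ⟨0, by simp [hw, heS0]⟩
  | succ m ih =>
    intro w hw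
    by_cases h0 : w = 0
    · exact ⟨0, by simp [h0, heS0]⟩
    · obtain ⟨k, hk⟩ := ih (tin.1 w) (by rw [← Function.iterate_succ_apply]; exact hw)
      exact ⟨k + 1, by rw [Function.iterate_succ_apply, glueq_inS eS fC tin tout w h0]; exact hk⟩

lemma glue_comm_out (tin : Tr j) (tout : Tr (n - j)) :
    ∀ (k : ℕ) (w : Fin (n - j + 1)),
      (glueq eS fC tin tout)^[k] ((fC w : Fin (n + 2))) = (fC (tout.1^[k] w) : Fin (n + 2)) := by
  intro k
  induction k with
  | zero => intro w; simp
  | succ k ih =>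
    intro w
    rw [Function.iterate_succ_apply, glueq_outS eS fC tin tout w, ih (tout.1 w),
      ← Function.iterate_succ_apply]

/-- the glued tree -/
def glueT (tin : Tr j) (tout : Tr (n - j)) (heS0 : ((eS 0 : Fin (n + 2))) = c)
    (hfC0 : ((fC 0 : Fin (n + 2))) = 0) : Tr (n + 1) :=
  ⟨glueq eS fC tin tout, glueq_zero eS fC tin tout hfC0, by
    intro u
    by_cases hu : u ∈ S
    · obtain ⟨m, hm⟩ := tin.2.2 (eS.symm ⟨u, hu⟩)
      obtain ⟨k, hk⟩ := glue_reach_in eS fC tin tout heS0 m _ hm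
      rw [show ((eS (eS.symm ⟨u, hu⟩) : Fin (n + 2))) = u from by
        rw [Equiv.apply_symm_apply]] at hk
      refine ⟨k + 1, ?_⟩
      rw [Function.iterate_succ_apply', hk, glueq_c eS fC tin tout heS0]
    · have hu' : u ∈ Sᶜ := Finset.mem_compl.mpr hu
      obtain ⟨m, hm⟩ := tout.2.2 (fC.symm ⟨u, hu'⟩)
      refine ⟨m, ?_⟩
      have h := glue_comm_out eS fC tin tout m (fC.symm ⟨u, hu'⟩)
      rw [show ((fC (fC.symm ⟨u, hu'⟩) : Fin (n + 2))) = u from by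
        rw [Equiv.apply_symm_apply]] at h
      rw [h, hm, hfC0]⟩

variable {heS0 : ((eS 0 : Fin (n + 2))) = c} {hfC0 : ((fC 0 : Fin (n + 2))) = 0}

lemma cvert_glue (tin : Tr j) (tout : Tr (n - j))
    (heS0 : ((eS 0 : Fin (n + 2))) = c) (hfC0 : ((fC 0 : Fin (n + 2))) = 0)
    (h1 : (1 : Fin (n + 2)) ∈ S) (h0S : (0 : Fin (n + 2)) ∉ S) :
    cvert (glueT eS fC tin tout heS0 hfC0) = c := by
  refine (cvert_unique _ c ?_ ?_ ?_).symm
  · obtain ⟨m, hm⟩ := tin.2.2 (eS.symm ⟨1, h1⟩)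
    obtain ⟨k, hk⟩ := glue_reach_in eS fC tin tout heS0 m _ hm
    rw [show ((eS (eS.symm ⟨1, h1⟩) : Fin (n + 2))) = 1 from by rw [Equiv.apply_symm_apply]] at hk
    exact ⟨k, hk⟩
  · intro hc0
    rw [hc0] at heS0
    exact h0S (heS0 ▸ (eS 0).2)
  · exact glueq_c eS fC tin tout heS0

lemma Sset_glue (tin : Tr j) (tout : Tr (n - j))
    (heS0 : ((eS 0 : Fin (n + 2))) = c) (hfC0 : ((fC 0 : Fin (n + 2))) = 0)
    (h1 : (1 : Fin (n + 2)) ∈ S) (h0S : (0 : Fin (n + 2)) ∉ S) :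
    Sset (glueT eS fC tin tout heS0 hfC0) = S := by
  have hcS : c ∈ S := heS0 ▸ (eS 0).2
  ext u
  rw [mem_Sset, cvert_glue eS fC tin tout heS0 hfC0 h1 h0S]
  constructor
  · rintro ⟨k, hk⟩
    by_contra hu
    have h := glue_comm_out eS fC tin tout k (fC.symm ⟨u, Finset.mem_compl.mpr hu⟩)
    rw [show ((fC (fC.symm ⟨u, Finset.mem_compl.mpr hu⟩) : Fin (n + 2))) = u from by
      rw [Equiv.apply_symm_apply]] at h
    have hcc : c ∈ Sᶜ := by
      rw [← hk]
      show (glueT eS fC tin tout heS0 hfC0).1^[k] u ∈ Sᶜ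
      rw [show (glueT eS fC tin tout heS0 hfC0).1 = glueq eS fC tin tout from rfl] at *
      rw [h]
      exact (fC _).2
    exact (Finset.mem_compl.mp hcc) hcS
  · intro hu
    obtain ⟨m, hm⟩ := tin.2.2 (eS.symm ⟨u, hu⟩)
    obtain ⟨k, hk⟩ := glue_reach_in eS fC tin tout heS0 m _ hm
    rw [show ((eS (eS.symm ⟨u, hu⟩) : Fin (n + 2))) = u from by rw [Equiv.apply_symm_apply]] at hk
    exact ⟨k, hk⟩

end GlueSec

section CutSec
variable {n j : ℕ} {S : Finset (Fin (n + 2))} {c : Fin (n + 2)}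
variable (eS : Fin (j + 1) ≃ {x : Fin (n + 2) // x ∈ S})
variable (fC : Fin (n - j + 1) ≃ {x : Fin (n + 2) // x ∈ Sᶜ})

lemma eS_symm_zero_iff (heS0 : ((eS 0 : Fin (n + 2))) = c) {u : Fin (n + 2)} (hu : u ∈ S) :
    eS.symm ⟨u, hu⟩ = 0 ↔ u = c := by
  constructor
  · intro h
    have h2 := congrArg (fun z => ((eS z : Fin (n + 2)))) h
    simpa [heS0] using h2
  · intro h
    rw [show (⟨u, hu⟩ : {x : Fin (n + 2) // x ∈ S}) = eS 0 from Subtype.ext (by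
      rw [heS0]; exact h), Equiv.symm_apply_apply]

lemma fC_symm_zero_iff (hfC0 : ((fC 0 : Fin (n + 2))) = 0) {u : Fin (n + 2)} (hu : u ∈ Sᶜ) :
    fC.symm ⟨u, hu⟩ = 0 ↔ u = 0 := by
  constructor
  · intro h
    have h2 := congrArg (fun z => ((fC z : Fin (n + 2)))) h
    simpa [hfC0] using h2
  · intro h
    rw [show (⟨u, hu⟩ : {x : Fin (n + 2) // x ∈ Sᶜ}) = fC 0 from Subtype.ext (by
      rw [hfC0]; exact h), Equiv.symm_apply_apply]

/-- the inside tree cut out of `τ` -/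
def cutinq (τ : Tr (n + 1)) : Fin (j + 1) → Fin (j + 1) := fun w =>
  if w = 0 then 0
  else if hmem : τ.1 (eS w) ∈ S then eS.symm ⟨τ.1 (eS w), hmem⟩ else 0

/-- the outside tree cut out of `τ` -/
def cutoutq (τ : Tr (n + 1)) : Fin (n - j + 1) → Fin (n - j + 1) := fun w =>
  if hmem : τ.1 (fC w) ∈ Sᶜ then fC.symm ⟨τ.1 (fC w), hmem⟩ else 0

lemma cutinq_zero (τ : Tr (n + 1)) : cutinq eS τ 0 = 0 := by simp [cutinq]

lemma cutinq_apply (τ : Tr (n + 1)) {u : Fin (n + 2)} (hu : u ∈ S)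
    (hw0 : eS.symm ⟨u, hu⟩ ≠ 0) (hqS : τ.1 u ∈ S) :
    cutinq eS τ (eS.symm ⟨u, hu⟩) = eS.symm ⟨τ.1 u, hqS⟩ := by
  simp only [cutinq]
  rw [if_neg hw0]
  have hcoe : ((eS (eS.symm ⟨u, hu⟩) : Fin (n + 2))) = u := by rw [Equiv.apply_symm_apply]
  simp only [hcoe]
  rw [dif_pos hqS]

lemma cutoutq_apply (τ : Tr (n + 1)) {u : Fin (n + 2)} (hu : u ∈ Sᶜ) (hq : τ.1 u ∈ Sᶜ) :
    cutoutq fC τ (fC.symm ⟨u, hu⟩) = fC.symm ⟨τ.1 u, hq⟩ := by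
  simp only [cutoutq]
  have hcoe : ((fC (fC.symm ⟨u, hu⟩) : Fin (n + 2))) = u := by rw [Equiv.apply_symm_apply]
  simp only [hcoe]
  rw [dif_pos hq]

lemma cutoutq_zero (τ : Tr (n + 1)) (hfC0 : ((fC 0 : Fin (n + 2))) = 0)
    (h0S : (0 : Fin (n + 2)) ∉ S) : cutoutq fC τ 0 = 0 := by
  simp only [cutoutq, hfC0]
  simp only [τ.2.1]
  rw [dif_pos (Finset.mem_compl.mpr h0S)]
  exact (fC_symm_zero_iff fC hfC0 (Finset.mem_compl.mpr h0S)).mpr rfl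

lemma cutin_reach (τ : Tr (n + 1)) (hS : Sset τ = S) (hc : cvert τ = c)
    (heS0 : ((eS 0 : Fin (n + 2))) = c) :
    ∀ (m : ℕ) (u : Fin (n + 2)) (hu : u ∈ S), τ.1^[m] u = c →
      ∃ k, (cutinq eS τ)^[k] (eS.symm ⟨u, hu⟩) = 0 := by
  intro m
  induction m with
  | zero =>
    intro u hu h
    simp only [Function.iterate_zero_apply] at h
    exact ⟨0, by simp [(eS_symm_zero_iff eS heS0 hu).mpr h]⟩
  | succ m ih =>
    intro u hu h
    by_cases huc : u = c
    · exact ⟨0, by simp [(eS_symm_zero_iff eS heS0 hu).mpr huc]⟩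
    · have hqS : τ.1 u ∈ S := by
        rw [← hS]
        exact Sset_closure_in (by rw [hS]; exact hu) (by rw [hc]; exact huc)
      obtain ⟨k, hk⟩ := ih (τ.1 u) hqS (by rw [← Function.iterate_succ_apply]; exact h)
      refine ⟨k + 1, ?_⟩
      rw [Function.iterate_succ_apply]
      have hw0 : (eS.symm ⟨u, hu⟩ : Fin (j + 1)) ≠ 0 := fun h0 =>
        huc ((eS_symm_zero_iff eS heS0 hu).mp h0)
      rw [cutinq_apply eS τ hu hw0 hqS]
      exact hk

lemma cutout_reach (τ : Tr (n + 1)) (hS : Sset τ = S)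
    (hfC0 : ((fC 0 : Fin (n + 2))) = 0) :
    ∀ (m : ℕ) (u : Fin (n + 2)) (hu : u ∈ Sᶜ), τ.1^[m] u = 0 →
      ∃ k, (cutoutq fC τ)^[k] (fC.symm ⟨u, hu⟩) = 0 := by
  intro m
  induction m with
  | zero =>
    intro u hu h
    simp only [Function.iterate_zero_apply] at h
    exact ⟨0, by simp [(fC_symm_zero_iff fC hfC0 hu).mpr h]⟩
  | succ m ih =>
    intro u hu h
    by_cases hu0 : u = 0
    · exact ⟨0, by simp [(fC_symm_zero_iff fC hfC0 hu).mpr hu0]⟩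
    · have hq : τ.1 u ∈ Sᶜ := by
        rw [Finset.mem_compl]
        have h2 := Sset_closure_out (τ := τ) (u := u) (by rw [hS]; exact Finset.mem_compl.mp hu)
        rw [hS] at h2
        exact h2
      obtain ⟨k, hk⟩ := ih (τ.1 u) hq (by rw [← Function.iterate_succ_apply]; exact h)
      refine ⟨k + 1, ?_⟩
      rw [Function.iterate_succ_apply, cutoutq_apply fC τ hu hq]
      exact hk

/-- the inside cut tree, as an element of `Tr j` -/
def cutinT (τ : Tr (n + 1)) (hS : Sset τ = S) (hc : cvert τ = c)
    (heS0 : ((eS 0 : Fin (n + 2))) = c) : Tr j :=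
  ⟨cutinq eS τ, cutinq_zero eS τ, by
    intro w
    obtain ⟨m, hm⟩ := mem_Sset.mp (show ((eS w : Fin (n + 2))) ∈ Sset τ from by
      rw [hS]; exact (eS w).2)
    rw [hc] at hm
    obtain ⟨k, hk⟩ := cutin_reach eS τ hS hc heS0 m _ (eS w).2 hm
    rw [show (eS.symm ⟨((eS w : Fin (n + 2))), (eS w).2⟩) = w from by
      rw [show (⟨((eS w : Fin (n + 2))), (eS w).2⟩ : {x : Fin (n + 2) // x ∈ S}) = eS w from
        Subtype.ext rfl, Equiv.symm_apply_apply]] at hk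
    exact ⟨k, hk⟩⟩

/-- the outside cut tree, as an element of `Tr (n - j)` -/
def cutoutT (τ : Tr (n + 1)) (hS : Sset τ = S)
    (hfC0 : ((fC 0 : Fin (n + 2))) = 0) (h0S : (0 : Fin (n + 2)) ∉ S) : Tr (n - j) :=
  ⟨cutoutq fC τ, cutoutq_zero fC τ hfC0 h0S, by
    intro w
    obtain ⟨m, hm⟩ := τ.2.2 (fC w)
    obtain ⟨k, hk⟩ := cutout_reach fC τ hS hfC0 m _ (fC w).2 hm
    rw [show (fC.symm ⟨((fC w : Fin (n + 2))), (fC w).2⟩) = w from by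
      rw [show (⟨((fC w : Fin (n + 2))), (fC w).2⟩ : {x : Fin (n + 2) // x ∈ Sᶜ}) = fC w from
        Subtype.ext rfl, Equiv.symm_apply_apply]] at hk
    exact ⟨k, hk⟩⟩

lemma glue_cut (τ : Tr (n + 1)) (hS : Sset τ = S) (hc : cvert τ = c)
    (heS0 : ((eS 0 : Fin (n + 2))) = c) (hfC0 : ((fC 0 : Fin (n + 2))) = 0)
    (h0S : (0 : Fin (n + 2)) ∉ S) :
    glueT eS fC (cutinT eS τ hS hc heS0) (cutoutT fC τ hS hfC0 h0S) heS0 hfC0 = τ := by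
  apply Subtype.ext
  funext u
  show glueq eS fC _ _ u = τ.1 u
  by_cases hu : u ∈ S
  · simp only [glueq]
    rw [dif_pos hu]
    by_cases h0 : eS.symm ⟨u, hu⟩ = 0
    · rw [if_pos h0]
      have huc : u = c := (eS_symm_zero_iff eS heS0 hu).mp h0
      rw [huc, ← hc]
      exact (q_cvert τ).symm
    · rw [if_neg h0]
      have huc : u ≠ c := fun h => h0 ((eS_symm_zero_iff eS heS0 hu).mpr h)
      have hqS : τ.1 u ∈ S := by
        rw [← hS]
        exact Sset_closure_in (by rw [hS]; exact hu) (by rw [hc]; exact huc)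
      rw [show (cutinT eS τ hS hc heS0).1 = cutinq eS τ from rfl,
        cutinq_apply eS τ hu h0 hqS, Equiv.apply_symm_apply]
  · simp only [glueq]
    rw [dif_neg hu]
    have hq : τ.1 u ∈ Sᶜ := by
      rw [Finset.mem_compl]
      have h2 := Sset_closure_out (τ := τ) (u := u) (by rw [hS]; exact hu)
      rw [hS] at h2
      exact h2
    rw [show (cutoutT fC τ hS hfC0 h0S).1 = cutoutq fC τ from rfl,
      cutoutq_apply fC τ (Finset.mem_compl.mpr hu) hq, Equiv.apply_symm_apply]

lemma cut_glue_in (tin : Tr j) (tout : Tr (n - j)) (heS0 : ((eS 0 : Fin (n + 2))) = c)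
    (hfC0 : ((fC 0 : Fin (n + 2))) = 0) :
    cutinq eS (glueT eS fC tin tout heS0 hfC0) = tin.1 := by
  funext w
  by_cases h0 : w = 0
  · rw [h0, cutinq_zero eS]
    exact (tin.2.1).symm
  · simp only [cutinq]
    rw [if_neg h0]
    have hq : (glueT eS fC tin tout heS0 hfC0).1 ((eS w : Fin (n + 2)))
        = ((eS (tin.1 w) : Fin (n + 2))) := glueq_inS eS fC tin tout w h0
    simp only [hq]
    rw [dif_pos (eS (tin.1 w)).2]
    rw [show (⟨((eS (tin.1 w) : Fin (n + 2))), (eS (tin.1 w)).2⟩ :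
      {x : Fin (n + 2) // x ∈ S}) = eS (tin.1 w) from Subtype.ext rfl, Equiv.symm_apply_apply]

lemma cut_glue_out (tin : Tr j) (tout : Tr (n - j)) (heS0 : ((eS 0 : Fin (n + 2))) = c)
    (hfC0 : ((fC 0 : Fin (n + 2))) = 0) :
    cutoutq fC (glueT eS fC tin tout heS0 hfC0) = tout.1 := by
  funext w
  simp only [cutoutq]
  have hq : (glueT eS fC tin tout heS0 hfC0).1 ((fC w : Fin (n + 2)))
      = ((fC (tout.1 w) : Fin (n + 2))) := glueq_outS eS fC tin tout w
  simp only [hq]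
  rw [dif_pos (fC (tout.1 w)).2]
  rw [show (⟨((fC (tout.1 w) : Fin (n + 2))), (fC (tout.1 w)).2⟩ :
    {x : Fin (n + 2) // x ∈ Sᶜ}) = fC (tout.1 w) from Subtype.ext rfl, Equiv.symm_apply_apply]

end CutSec

section WeightSec
variable {n j : ℕ} {S : Finset (Fin (n + 2))} {c : Fin (n + 2)}
variable (eS : Fin (j + 1) ≃ {x : Fin (n + 2) // x ∈ S})
variable (fC : Fin (n - j + 1) ≃ {x : Fin (n + 2) // x ∈ Sᶜ})

lemma eS_ne_zero (h0S : (0 : Fin (n + 2)) ∉ S) (w : Fin (j + 1)) :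
    ((eS w : Fin (n + 2))) ≠ 0 := fun h => h0S (h ▸ (eS w).2)

lemma fC_succ_ne_zero (hfC0 : ((fC 0 : Fin (n + 2))) = 0) (w : Fin (n - j)) :
    ((fC w.succ : Fin (n + 2))) ≠ 0 := by
  intro h
  have h2 : fC w.succ = fC 0 := Subtype.ext (by rw [hfC0]; exact h)
  exact (Fin.succ_ne_zero w) (fC.injective h2)

/-- identification of the nonroot vertices with inside and outside labels -/
def vertEquiv (h0S : (0 : Fin (n + 2)) ∉ S) (hfC0 : ((fC 0 : Fin (n + 2))) = 0) :
    (Fin (j + 1) ⊕ Fin (n - j)) ≃ Fin (n + 1) where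
  toFun x := Sum.rec (fun w => ((eS w : Fin (n + 2))).pred (eS_ne_zero eS h0S w))
    (fun w => ((fC w.succ : Fin (n + 2))).pred (fC_succ_ne_zero fC hfC0 w)) x
  invFun v :=
    if h : v.succ ∈ S then Sum.inl (eS.symm ⟨v.succ, h⟩)
    else Sum.inr ((fC.symm ⟨v.succ, Finset.mem_compl.mpr h⟩).pred (fun h0 =>
      (Fin.succ_ne_zero v) (by
        have h2 := congrArg (fun z => ((fC z : Fin (n + 2)))) h0
        simpa [hfC0] using h2)))
  left_inv := by
    rintro (w | w)
    · simp only [Fin.succ_pred]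
      rw [dif_pos (eS w).2]
      simp only [Subtype.coe_eta, Equiv.symm_apply_apply]
    · simp only [Fin.succ_pred]
      rw [dif_neg (Finset.mem_compl.mp (fC w.succ).2)]
      simp only [Subtype.coe_eta, Equiv.symm_apply_apply, Fin.pred_succ]
  right_inv := by
    intro v
    by_cases h : v.succ ∈ S
    · simp only [dif_pos h]
      simp only [Equiv.apply_symm_apply, Fin.pred_succ]
    · simp only [dif_neg h]
      simp only [Fin.succ_pred, Equiv.apply_symm_apply, Fin.pred_succ]

lemma vertEquiv_symm_inS (h0S : (0 : Fin (n + 2)) ∉ S) (hfC0 : ((fC 0 : Fin (n + 2))) = 0)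
    (v : Fin (n + 1)) (h : v.succ ∈ S) :
    (vertEquiv eS fC h0S hfC0).symm v = Sum.inl (eS.symm ⟨v.succ, h⟩) := by
  simp only [vertEquiv, Equiv.coe_fn_symm_mk]
  rw [dif_pos h]

lemma vertEquiv_symm_notS (h0S : (0 : Fin (n + 2)) ∉ S) (hfC0 : ((fC 0 : Fin (n + 2))) = 0)
    (v : Fin (n + 1)) (h : v.succ ∉ S) :
    (vertEquiv eS fC h0S hfC0).symm v = Sum.inr
      ((fC.symm ⟨v.succ, Finset.mem_compl.mpr h⟩).pred (fun h0 =>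
        (Fin.succ_ne_zero v) (by
          have h2 := congrArg (fun z => ((fC z : Fin (n + 2)))) h0
          simpa [hfC0] using h2))) := by
  simp only [vertEquiv, Equiv.coe_fn_symm_mk]
  rw [dif_neg h]

variable {P : Type*}

/-- the corresponding splitting of labellings -/
def gEquiv (h0S : (0 : Fin (n + 2)) ∉ S) (hfC0 : ((fC 0 : Fin (n + 2))) = 0) :
    (Fin (n + 1) → P) ≃ ((Fin (j + 1) → P) × (Fin (n - j) → P)) :=
  (Equiv.arrowCongr (vertEquiv eS fC h0S hfC0).symm (Equiv.refl P)).trans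
    (Equiv.sumArrowEquivProdArrow _ _ _)

lemma gEquiv_symm_apply (h0S : (0 : Fin (n + 2)) ∉ S) (hfC0 : ((fC 0 : Fin (n + 2))) = 0)
    (p : (Fin (j + 1) → P) × (Fin (n - j) → P)) (v : Fin (n + 1)) :
    (gEquiv (P := P) eS fC h0S hfC0).symm p v
      = Sum.elim p.1 p.2 ((vertEquiv eS fC h0S hfC0).symm v) := rfl

lemma cons_gEquiv_inS (h0S : (0 : Fin (n + 2)) ∉ S) (hfC0 : ((fC 0 : Fin (n + 2))) = 0)
    (γ : P) (gin' : Fin (j + 1) → P) (gout : Fin (n - j) → P) (w : Fin (j + 1)) :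
    (Fin.cons γ ((gEquiv eS fC h0S hfC0).symm (gin', gout)) : Fin (n + 2) → P)
      ((eS w : Fin (n + 2))) = gin' w := by
  have hne := eS_ne_zero eS h0S w
  rw [← Fin.succ_pred ((eS w : Fin (n + 2))) hne, Fin.cons_succ, gEquiv_symm_apply]
  have hvs : (((eS w : Fin (n + 2))).pred hne).succ ∈ S := by
    rw [Fin.succ_pred]; exact (eS w).2
  rw [vertEquiv_symm_inS eS fC h0S hfC0 _ hvs]
  simp only [Sum.elim_inl, Fin.succ_pred, Subtype.coe_eta, Equiv.symm_apply_apply]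

lemma cons_gEquiv_fC (h0S : (0 : Fin (n + 2)) ∉ S) (hfC0 : ((fC 0 : Fin (n + 2))) = 0)
    (γ : P) (gin' : Fin (j + 1) → P) (gout : Fin (n - j) → P) (w : Fin (n - j + 1)) :
    (Fin.cons γ ((gEquiv eS fC h0S hfC0).symm (gin', gout)) : Fin (n + 2) → P)
      ((fC w : Fin (n + 2))) = (Fin.cons γ gout : Fin (n - j + 1) → P) w := by
  refine Fin.cases ?_ ?_ w
  · rw [hfC0]
    simp only [Fin.cons_zero]
  · intro u
    have hne := fC_succ_ne_zero fC hfC0 u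
    rw [← Fin.succ_pred ((fC u.succ : Fin (n + 2))) hne, Fin.cons_succ, gEquiv_symm_apply]
    have hvs : (((fC u.succ : Fin (n + 2))).pred hne).succ ∉ S := by
      rw [Fin.succ_pred]; exact Finset.mem_compl.mp (fC u.succ).2
    rw [vertEquiv_symm_notS eS fC h0S hfC0 _ hvs]
    simp only [Sum.elim_inr, Fin.cons_succ, Fin.succ_pred, Subtype.coe_eta,
      Equiv.symm_apply_apply, Fin.pred_succ]

end WeightSec

section WVGlue
variable {n j : ℕ} {S : Finset (Fin (n + 2))} {c : Fin (n + 2)}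
variable (eS : Fin (j + 1) ≃ {x : Fin (n + 2) // x ∈ S})
variable (fC : Fin (n - j + 1) ≃ {x : Fin (n + 2) // x ∈ Sᶜ})

lemma wV_glueT (γ : P) (tin : Tr j) (tout : Tr (n - j))
    (heS0 : ((eS 0 : Fin (n + 2))) = c) (hfC0 : ((fC 0 : Fin (n + 2))) = 0)
    (h0S : (0 : Fin (n + 2)) ∉ S) :
    wV F r (n + 1) γ (glueT eS fC tin tout heS0 hfC0)
      = (∑' γc : P, F γ γc * r γc * wV F r j γc tin) * wV F r (n - j) γ tout := by
  classical
  set q' : Fin (n + 2) → Fin (n + 2) := glueq eS fC tin tout with hq'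
  set H : (Fin (n + 1) → P) → Fin (n + 2) → ℝ≥0∞ := fun g u =>
    if u = 0 then 1
    else F ((Fin.cons γ g : Fin (n + 2) → P) (q' u)) ((Fin.cons γ g : Fin (n + 2) → P) u) *
      r ((Fin.cons γ g : Fin (n + 2) → P) u) with hH
  have hA : ∀ g : Fin (n + 1) → P,
      (∏ v : Fin (n + 1), F ((Fin.cons γ g : Fin (n + 2) → P) (q' v.succ))
          ((Fin.cons γ g : Fin (n + 2) → P) v.succ) * r (g v))
        = ∏ u : Fin (n + 2), H g u := by
    intro g
    rw [Fin.prod_univ_succ (H g)]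
    simp only [hH]
    simp only [if_true, one_mul, Fin.succ_ne_zero, if_false, Fin.cons_succ]
  have h1 : wV F r (n + 1) γ (glueT eS fC tin tout heS0 hfC0)
      = ∑' g : Fin (n + 1) → P, ∏ u : Fin (n + 2), H g u := by
    rw [wV]
    exact tsum_congr fun g => hA g
  have h2 : ∀ p : (Fin (j + 1) → P) × (Fin (n - j) → P),
      (∏ u : Fin (n + 2), H ((gEquiv eS fC h0S hfC0).symm p) u)
        = (F γ (p.1 0) * r (p.1 0) *
            ∏ w : Fin j, (F (p.1 (tin.1 w.succ)) (p.1 w.succ) * r (p.1 w.succ)))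
          * ∏ w : Fin (n - j), (F ((Fin.cons γ p.2 : Fin (n - j + 1) → P) (tout.1 w.succ))
              ((Fin.cons γ p.2 : Fin (n - j + 1) → P) w.succ) * r (p.2 w)) := by
    rintro ⟨gin', gout⟩
    set g' : Fin (n + 1) → P := (gEquiv eS fC h0S hfC0).symm (gin', gout) with hg'
    rw [← Finset.prod_mul_prod_compl S (H g')]
    congr 1
    · calc ∏ u ∈ S, H g' u
          = ∏ x : {x : Fin (n + 2) // x ∈ S}, H g' x := (Finset.prod_coe_sort S (H g')).symm
        _ = ∏ w : Fin (j + 1), H g' ((eS w : Fin (n + 2))) :=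
            (Equiv.prod_comp eS (fun x : {x : Fin (n + 2) // x ∈ S} => H g' x)).symm
        _ = H g' ((eS 0 : Fin (n + 2))) * ∏ w : Fin j, H g' ((eS w.succ : Fin (n + 2))) :=
            Fin.prod_univ_succ _
        _ = F γ (gin' 0) * r (gin' 0) *
            ∏ w : Fin j, (F (gin' (tin.1 w.succ)) (gin' w.succ) * r (gin' w.succ)) := by
            congr 1
            · simp only [hH]
              rw [if_neg (eS_ne_zero eS h0S 0)]
              have hq0 : q' ((eS 0 : Fin (n + 2))) = 0 := by
                rw [heS0]; exact glueq_c eS fC tin tout heS0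
              rw [hq0]
              rw [show (Fin.cons γ g' : Fin (n + 2) → P) 0 = γ from Fin.cons_zero _ _]
              rw [hg', cons_gEquiv_inS eS fC h0S hfC0 γ gin' gout 0]
            · apply Finset.prod_congr rfl
              intro w _
              simp only [hH]
              rw [if_neg (eS_ne_zero eS h0S w.succ)]
              have hqw : q' ((eS w.succ : Fin (n + 2))) = ((eS (tin.1 w.succ) : Fin (n + 2))) :=
                glueq_inS eS fC tin tout w.succ (Fin.succ_ne_zero w)
              rw [hqw, hg', cons_gEquiv_inS eS fC h0S hfC0 γ gin' gout (tin.1 w.succ),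
                cons_gEquiv_inS eS fC h0S hfC0 γ gin' gout w.succ]
    · calc ∏ u ∈ Sᶜ, H g' u
          = ∏ x : {x : Fin (n + 2) // x ∈ Sᶜ}, H g' x := (Finset.prod_coe_sort Sᶜ (H g')).symm
        _ = ∏ w : Fin (n - j + 1), H g' ((fC w : Fin (n + 2))) :=
            (Equiv.prod_comp fC (fun x : {x : Fin (n + 2) // x ∈ Sᶜ} => H g' x)).symm
        _ = H g' ((fC 0 : Fin (n + 2))) * ∏ w : Fin (n - j), H g' ((fC w.succ : Fin (n + 2))) :=
            Fin.prod_univ_succ _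
        _ = ∏ w : Fin (n - j), (F ((Fin.cons γ gout : Fin (n - j + 1) → P) (tout.1 w.succ))
              ((Fin.cons γ gout : Fin (n - j + 1) → P) w.succ) * r (gout w)) := by
            rw [show H g' ((fC 0 : Fin (n + 2))) = 1 from by rw [hfC0]; simp only [hH, if_pos rfl],
              one_mul]
            apply Finset.prod_congr rfl
            intro w _
            simp only [hH]
            rw [if_neg (fC_succ_ne_zero fC hfC0 w)]
            have hqw : q' ((fC w.succ : Fin (n + 2))) = ((fC (tout.1 w.succ) : Fin (n + 2))) :=
              glueq_outS eS fC tin tout w.succ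
            rw [hqw, hg', cons_gEquiv_fC eS fC h0S hfC0 γ gin' gout (tout.1 w.succ),
              cons_gEquiv_fC eS fC h0S hfC0 γ gin' gout w.succ]
            rw [show (Fin.cons γ gout : Fin (n - j + 1) → P) w.succ = gout w from
              Fin.cons_succ _ _ _]
  calc wV F r (n + 1) γ (glueT eS fC tin tout heS0 hfC0)
      = ∑' g : Fin (n + 1) → P, ∏ u : Fin (n + 2), H g u := h1
    _ = ∑' p : (Fin (j + 1) → P) × (Fin (n - j) → P),
          ∏ u : Fin (n + 2), H ((gEquiv eS fC h0S hfC0).symm p) u :=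
        (Equiv.tsum_eq (gEquiv eS fC h0S hfC0).symm
          (fun g => ∏ u : Fin (n + 2), H g u)).symm
    _ = ∑' p : (Fin (j + 1) → P) × (Fin (n - j) → P),
          (fun (gin' : Fin (j + 1) → P) (gout : Fin (n - j) → P) =>
            (F γ (gin' 0) * r (gin' 0) *
              ∏ w : Fin j, (F (gin' (tin.1 w.succ)) (gin' w.succ) * r (gin' w.succ)))
            * ∏ w : Fin (n - j), (F ((Fin.cons γ gout : Fin (n - j + 1) → P) (tout.1 w.succ))
                ((Fin.cons γ gout : Fin (n - j + 1) → P) w.succ) * r (gout w))) p.1 p.2 := by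
        apply tsum_congr
        intro p
        exact h2 p
    _ = ∑' gin' : Fin (j + 1) → P, ∑' gout : Fin (n - j) → P,
          (F γ (gin' 0) * r (gin' 0) *
            ∏ w : Fin j, (F (gin' (tin.1 w.succ)) (gin' w.succ) * r (gin' w.succ)))
          * ∏ w : Fin (n - j), (F ((Fin.cons γ gout : Fin (n - j + 1) → P) (tout.1 w.succ))
              ((Fin.cons γ gout : Fin (n - j + 1) → P) w.succ) * r (gout w)) :=
        ENNReal.tsum_prod (f := fun (gin' : Fin (j + 1) → P) (gout : Fin (n - j) → P) =>
          (F γ (gin' 0) * r (gin' 0) *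
            ∏ w : Fin j, (F (gin' (tin.1 w.succ)) (gin' w.succ) * r (gin' w.succ)))
          * ∏ w : Fin (n - j), (F ((Fin.cons γ gout : Fin (n - j + 1) → P) (tout.1 w.succ))
              ((Fin.cons γ gout : Fin (n - j + 1) → P) w.succ) * r (gout w)))
    _ = (∑' gin' : Fin (j + 1) → P,
          F γ (gin' 0) * r (gin' 0) *
            ∏ w : Fin j, (F (gin' (tin.1 w.succ)) (gin' w.succ) * r (gin' w.succ)))
          * wV F r (n - j) γ tout := by
        rw [← ENNReal.tsum_mul_right]
        apply tsum_congr
        intro gin'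
        rw [ENNReal.tsum_mul_left, wV]
    _ = (∑' γc : P, F γ γc * r γc * wV F r j γc tin) * wV F r (n - j) γ tout := by
        congr 1
        calc (∑' gin' : Fin (j + 1) → P,
              F γ (gin' 0) * r (gin' 0) *
                ∏ w : Fin j, (F (gin' (tin.1 w.succ)) (gin' w.succ) * r (gin' w.succ)))
            = ∑' p : P × (Fin j → P),
                (fun (γc : P) (g1 : Fin j → P) =>
                  F γ γc * r γc * ∏ w : Fin j,
                    (F ((Fin.cons γc g1 : Fin (j + 1) → P) (tin.1 w.succ))
                      ((Fin.cons γc g1 : Fin (j + 1) → P) w.succ) * r (g1 w))) p.1 p.2 := by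
              rw [← Equiv.tsum_eq (Fin.consEquiv (fun _ : Fin (j + 1) => P))
                (fun gin' => F γ (gin' 0) * r (gin' 0) *
                  ∏ w : Fin j, (F (gin' (tin.1 w.succ)) (gin' w.succ) * r (gin' w.succ)))]
              apply tsum_congr
              rintro ⟨γc, g1⟩
              have hc : (Fin.consEquiv (fun _ : Fin (j + 1) => P)) (γc, g1)
                  = (Fin.cons γc g1 : Fin (j + 1) → P) := rfl
              rw [hc]
              simp only [Fin.cons_zero, Fin.cons_succ]
          _ = ∑' γc : P, ∑' g1 : Fin j → P,
                F γ γc * r γc * ∏ w : Fin j,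
                  (F ((Fin.cons γc g1 : Fin (j + 1) → P) (tin.1 w.succ))
                    ((Fin.cons γc g1 : Fin (j + 1) → P) w.succ) * r (g1 w)) :=
              ENNReal.tsum_prod (f := fun (γc : P) (g1 : Fin j → P) =>
                F γ γc * r γc * ∏ w : Fin j,
                  (F ((Fin.cons γc g1 : Fin (j + 1) → P) (tin.1 w.succ))
                    ((Fin.cons γc g1 : Fin (j + 1) → P) w.succ) * r (g1 w)))
          _ = ∑' γc : P, F γ γc * r γc * wV F r j γc tin := by
              apply tsum_congr
              intro γc
              rw [ENNReal.tsum_mul_left, wV]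

end WVGlue

lemma fiber_sum (n : ℕ) (γ : P) (S : Finset (Fin (n + 2))) (c : Fin (n + 2))
    (h0S : (0 : Fin (n + 2)) ∉ S) (h1S : (1 : Fin (n + 2)) ∈ S) (hcS : c ∈ S) :
    (∑ τ ∈ Finset.univ.filter (fun τ : Tr (n + 1) => (Sset τ, cvert τ) = (S, c)),
        wV F r (n + 1) γ τ)
      = DD F r (S.card - 1) γ * A F r (n - (S.card - 1)) γ := by
  classical
  obtain ⟨j, hj⟩ : ∃ j, S.card = j + 1 := ⟨S.card - 1, by
    have := Finset.card_pos.mpr ⟨1, h1S⟩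
    omega⟩
  have hjn : j ≤ n := by
    have hsub : S ⊆ Finset.univ.erase 0 := fun x hx =>
      Finset.mem_erase.mpr ⟨fun h => h0S (h ▸ hx), Finset.mem_univ _⟩
    have hle := Finset.card_le_card hsub
    rw [Finset.card_erase_of_mem (Finset.mem_univ _), Finset.card_univ, Fintype.card_fin] at hle
    omega
  have hcc : Sᶜ.card = (n - j) + 1 := by
    rw [Finset.card_compl, Fintype.card_fin]
    omega
  set isoS := S.orderIsoOfFin hj with hisoS
  set pc : Fin (j + 1) := isoS.symm ⟨c, hcS⟩ with hpc
  set eS : Fin (j + 1) ≃ {x : Fin (n + 2) // x ∈ S} :=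
    (Equiv.swap (0 : Fin (j + 1)) pc).trans isoS.toEquiv with heSdef
  have heS0 : ((eS 0 : Fin (n + 2))) = c := by
    rw [heSdef]
    simp only [Equiv.trans_apply, Equiv.swap_apply_left]
    rw [show isoS.toEquiv pc = isoS pc from rfl, hpc, OrderIso.apply_symm_apply]
  set fC : Fin (n - j + 1) ≃ {x : Fin (n + 2) // x ∈ Sᶜ} := (Sᶜ.orderIsoOfFin hcc).toEquiv
    with hfCdef
  have h0c : (0 : Fin (n + 2)) ∈ Sᶜ := Finset.mem_compl.mpr h0S
  have hfC0 : ((fC 0 : Fin (n + 2))) = 0 := by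
    have hle : (Sᶜ.orderIsoOfFin hcc) 0 ≤ ⟨0, h0c⟩ := by
      have h2 := (Sᶜ.orderIsoOfFin hcc).monotone
        (Fin.zero_le ((Sᶜ.orderIsoOfFin hcc).symm ⟨0, h0c⟩))
      rwa [OrderIso.apply_symm_apply] at h2
    have h3 : ((fC 0 : Fin (n + 2))) ≤ 0 := hle
    exact Fin.le_zero_iff.mp h3
  have hSof : ∀ {τ : Tr (n + 1)},
      τ ∈ Finset.univ.filter (fun τ : Tr (n + 1) => (Sset τ, cvert τ) = (S, c)) →
        Sset τ = S := fun hτ => congrArg Prod.fst (Finset.mem_filter.mp hτ).2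
  have hcof : ∀ {τ : Tr (n + 1)},
      τ ∈ Finset.univ.filter (fun τ : Tr (n + 1) => (Sset τ, cvert τ) = (S, c)) →
        cvert τ = c := fun hτ => congrArg Prod.snd (Finset.mem_filter.mp hτ).2
  have hbij : (∑ τ ∈ Finset.univ.filter (fun τ : Tr (n + 1) => (Sset τ, cvert τ) = (S, c)),
        wV F r (n + 1) γ τ)
      = ∑ d ∈ (Finset.univ : Finset (Tr j × Tr (n - j))),
          (∑' γc : P, F γ γc * r γc * wV F r j γc d.1) * wV F r (n - j) γ d.2 := by
    refine Finset.sum_bij'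
      (i := fun τ hτ => (cutinT eS τ (hSof hτ) (hcof hτ) heS0, cutoutT fC τ (hSof hτ) hfC0 h0S))
      (j := fun d _ => glueT eS fC d.1 d.2 heS0 hfC0)
      (fun τ hτ => Finset.mem_univ _)
      (fun d hd => ?_) (fun τ hτ => ?_) (fun d hd => ?_) (fun τ hτ => ?_)
    · refine Finset.mem_filter.mpr ⟨Finset.mem_univ _, ?_⟩
      rw [Sset_glue eS fC d.1 d.2 heS0 hfC0 h1S h0S, cvert_glue eS fC d.1 d.2 heS0 hfC0 h1S h0S]
    · exact glue_cut eS fC τ (hSof hτ) (hcof hτ) heS0 hfC0 h0S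
    · refine Prod.ext ?_ ?_
      · exact Subtype.ext (cut_glue_in eS fC d.1 d.2 heS0 hfC0)
      · exact Subtype.ext (cut_glue_out eS fC d.1 d.2 heS0 hfC0)
    · conv_lhs => rw [← glue_cut eS fC τ (hSof hτ) (hcof hτ) heS0 hfC0 h0S]
      exact wV_glueT F r eS fC γ _ _ heS0 hfC0 h0S
  rw [hbij, show S.card - 1 = j by omega]
  rw [Fintype.sum_prod_type (f := fun d : Tr j × Tr (n - j) =>
    (∑' γc : P, F γ γc * r γc * wV F r j γc d.1) * wV F r (n - j) γ d.2)]
  rw [Finset.sum_congr rfl (fun x (_ : x ∈ Finset.univ) => Finset.sum_congr rfl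
    (fun y (_ : y ∈ Finset.univ) => (rfl :
      ((∑' γc : P, F γ γc * r γc * wV F r j γc (x, y).1) * wV F r (n - j) γ (x, y).2)
      = (∑' γc : P, F γ γc * r γc * wV F r j γc x) * wV F r (n - j) γ y)))]
  rw [show (∑ x : Tr j, ∑ y : Tr (n - j),
        (∑' γc : P, F γ γc * r γc * wV F r j γc x) * wV F r (n - j) γ y)
      = (∑ x : Tr j, ∑' γc : P, F γ γc * r γc * wV F r j γc x) *
        (∑ y : Tr (n - j), wV F r (n - j) γ y) from
    (Finset.sum_mul_sum Finset.univ Finset.univ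
      (fun x => ∑' γc : P, F γ γc * r γc * wV F r j γc x)
      (fun y => wV F r (n - j) γ y)).symm]
  congr 1
  · rw [DD]
    rw [← Summable.tsum_finsetSum (fun tin _ => ENNReal.summable)]
    apply tsum_congr
    intro γc
    rw [← Finset.mul_sum, A, tsum_fintype]
  · rw [A, tsum_fintype]

lemma L1 (n : ℕ) (γ : P) :
    A F r (n + 1) γ
      = ∑ j ∈ range (n + 1), (n.choose j : ℝ≥0∞) *
          (((j : ℝ≥0∞) + 1) * (DD F r j γ * A F r (n - j) γ)) := by
  classical
  rw [A, tsum_fintype, ← Finset.sum_fiberwise Finset.univ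
    (fun τ : Tr (n + 1) => (Sset τ, cvert τ)) (wV F r (n + 1) γ)]
  have hval : ∀ p : Finset (Fin (n + 2)) × Fin (n + 2),
      (∑ τ ∈ Finset.univ.filter (fun τ : Tr (n + 1) => (Sset τ, cvert τ) = p),
          wV F r (n + 1) γ τ)
        = if (0 : Fin (n + 2)) ∉ p.1 ∧ (1 : Fin (n + 2)) ∈ p.1 ∧ p.2 ∈ p.1
          then DD F r (p.1.card - 1) γ * A F r (n - (p.1.card - 1)) γ else 0 := by
    rintro ⟨S, c⟩
    by_cases h : (0 : Fin (n + 2)) ∉ S ∧ (1 : Fin (n + 2)) ∈ S ∧ c ∈ S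
    · rw [if_pos h]
      exact fiber_sum F r n γ S c h.1 h.2.1 h.2.2
    · rw [if_neg h]
      apply Finset.sum_eq_zero
      intro τ hτ
      exfalso
      apply h
      have h2 := (Finset.mem_filter.mp hτ).2
      have hS : Sset τ = S := congrArg Prod.fst h2
      have hcv : cvert τ = c := congrArg Prod.snd h2
      refine ⟨by rw [← hS]; exact zero_not_mem_Sset τ, by rw [← hS]; exact one_mem_Sset τ,
        by rw [← hS, ← hcv]; exact cvert_mem_Sset τ⟩
  rw [Finset.sum_congr rfl (fun p _ => hval p)]
  rw [Fintype.sum_prod_type]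
  have hcsum : ∀ S : Finset (Fin (n + 2)),
      (∑ c : Fin (n + 2), if (0 : Fin (n + 2)) ∉ S ∧ (1 : Fin (n + 2)) ∈ S ∧ c ∈ S
          then DD F r (S.card - 1) γ * A F r (n - (S.card - 1)) γ else 0)
        = if (0 : Fin (n + 2)) ∉ S ∧ (1 : Fin (n + 2)) ∈ S
          then (S.card : ℝ≥0∞) * (DD F r (S.card - 1) γ * A F r (n - (S.card - 1)) γ)
          else 0 := by
    intro S
    by_cases h : (0 : Fin (n + 2)) ∉ S ∧ (1 : Fin (n + 2)) ∈ S
    · rw [if_pos h]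
      rw [Finset.sum_congr rfl (fun cc (_ : cc ∈ Finset.univ) => show
          (if (0 : Fin (n + 2)) ∉ S ∧ (1 : Fin (n + 2)) ∈ S ∧ cc ∈ S
            then DD F r (S.card - 1) γ * A F r (n - (S.card - 1)) γ else 0)
          = if cc ∈ S then DD F r (S.card - 1) γ * A F r (n - (S.card - 1)) γ else 0 from by
        by_cases hcS : cc ∈ S <;> simp [h.1, h.2, hcS])]
      rw [Finset.sum_ite_mem Finset.univ S _, Finset.univ_inter, Finset.sum_const,
        nsmul_eq_mul]
    · rw [if_neg h]
      apply Finset.sum_eq_zero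
      intro cc _
      rw [if_neg (fun hh => h ⟨hh.1, hh.2.1⟩)]
  rw [Finset.sum_congr rfl (fun S _ => hcsum S)]
  rw [← Finset.sum_filter
    (fun S : Finset (Fin (n + 2)) => (0 : Fin (n + 2)) ∉ S ∧ (1 : Fin (n + 2)) ∈ S)
    (fun S => (S.card : ℝ≥0∞) * (DD F r (S.card - 1) γ * A F r (n - (S.card - 1)) γ))]
  set W : Finset (Fin (n + 2)) := (Finset.univ.erase 0).erase 1 with hW
  have h1W : (1 : Fin (n + 2)) ∉ W := fun h => (Finset.mem_erase.mp h).1 rfl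
  have h0W : (0 : Fin (n + 2)) ∉ W := fun h =>
    (Finset.mem_erase.mp (Finset.mem_erase.mp h).2).1 rfl
  have hWcard : W.card = n := by
    rw [hW, Finset.card_erase_of_mem (Finset.mem_erase.mpr ⟨fin_one_ne_zero', Finset.mem_univ _⟩),
      Finset.card_erase_of_mem (Finset.mem_univ _), Finset.card_univ, Fintype.card_fin]
    omega
  have hbijS : (∑ S ∈ Finset.univ.filter
        (fun S : Finset (Fin (n + 2)) => (0 : Fin (n + 2)) ∉ S ∧ (1 : Fin (n + 2)) ∈ S),
        (S.card : ℝ≥0∞) * (DD F r (S.card - 1) γ * A F r (n - (S.card - 1)) γ))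
      = ∑ S' ∈ W.powerset,
          (((insert (1 : Fin (n + 2)) S').card : ℝ≥0∞) *
            (DD F r ((insert (1 : Fin (n + 2)) S').card - 1) γ *
              A F r (n - ((insert (1 : Fin (n + 2)) S').card - 1)) γ)) := by
    refine Finset.sum_bij' (i := fun S _ => S.erase 1) (j := fun S' _ => insert 1 S')
      ?_ ?_ ?_ ?_ ?_
    · intro S hS
      rw [Finset.mem_powerset]
      intro x hx
      have hx1 := Finset.mem_erase.mp hx
      have hcond := (Finset.mem_filter.mp hS).2
      rw [hW]
      exact Finset.mem_erase.mpr ⟨hx1.1,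
        Finset.mem_erase.mpr ⟨fun h0 => hcond.1 (h0 ▸ hx1.2), Finset.mem_univ _⟩⟩
    · intro S' hS'
      have hsub := Finset.mem_powerset.mp hS'
      refine Finset.mem_filter.mpr ⟨Finset.mem_univ _, ?_, Finset.mem_insert_self _ _⟩
      intro h0
      rcases Finset.mem_insert.mp h0 with h | h
      · exact fin_one_ne_zero' h.symm
      · exact h0W (hsub h)
    · intro S hS
      exact Finset.insert_erase ((Finset.mem_filter.mp hS).2).2
    · intro S' hS'
      exact Finset.erase_insert (fun h1 => h1W (Finset.mem_powerset.mp hS' h1))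
    · intro S hS
      rw [Finset.insert_erase ((Finset.mem_filter.mp hS).2).2]
  rw [hbijS, Finset.sum_powerset, hWcard]
  apply Finset.sum_congr rfl
  intro j hj
  have hterm : ∀ S' ∈ Finset.powersetCard j W,
      (((insert (1 : Fin (n + 2)) S').card : ℝ≥0∞) *
        (DD F r ((insert (1 : Fin (n + 2)) S').card - 1) γ *
          A F r (n - ((insert (1 : Fin (n + 2)) S').card - 1)) γ))
      = ((j : ℝ≥0∞) + 1) * (DD F r j γ * A F r (n - j) γ) := by
    intro S' hS'
    obtain ⟨hsub, hcard⟩ := Finset.mem_powersetCard.mp hS'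
    have h1S' : (1 : Fin (n + 2)) ∉ S' := fun h => h1W (hsub h)
    have hci : (insert (1 : Fin (n + 2)) S').card = j + 1 := by
      rw [Finset.card_insert_of_notMem h1S', hcard]
    rw [hci]
    simp only [Nat.add_sub_cancel]
    congr 1
    push_cast
    ring
  rw [Finset.sum_congr rfl hterm, Finset.sum_const, Finset.card_powersetCard, hWcard,
    nsmul_eq_mul]

lemma main_lemma (n : ℕ) (γ : P) : A F r n γ = (n.factorial : ℝ≥0∞) * Tt F r n γ := by
  induction n using Nat.strong_induction_on generalizing γ with
  | _ n ih =>
    match n with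
    | 0 =>
      rw [A_zero, Tt_zero]; simp
    | (n+1) =>
      have hD : ∀ j, j < n + 1 → DD F r j γ = (j.factorial : ℝ≥0∞) * Uu F r j γ := by
        intro j hj
        rw [DD, Uu, ← ENNReal.tsum_mul_left]
        apply tsum_congr; intro γ'
        rw [ih j hj]; ring
      rw [L1]
      have hterm : ∀ j ∈ range (n + 1),
          (n.choose j : ℝ≥0∞) * (((j : ℝ≥0∞) + 1) * (DD F r j γ * A F r (n - j) γ))
            = (n.factorial : ℝ≥0∞) * (((j : ℝ≥0∞) + 1) * Uu F r j γ * Tt F r (n - j) γ) := by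
        intro j hj
        have hj' : j ≤ n := Nat.lt_succ_iff.mp (mem_range.mp hj)
        rw [hD j (Nat.lt_succ_of_le hj'), ih (n - j) (Nat.lt_succ_of_le (Nat.sub_le _ _))]
        have hnum : (n.choose j : ℝ≥0∞) * (j.factorial : ℝ≥0∞) * ((n - j).factorial : ℝ≥0∞)
            = (n.factorial : ℝ≥0∞) := by
          rw [← Nat.cast_mul, ← Nat.cast_mul, Nat.choose_mul_factorial_mul_factorial hj']
        calc (n.choose j : ℝ≥0∞) * (((j : ℝ≥0∞) + 1) *
                (((j.factorial : ℝ≥0∞) * Uu F r j γ) *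
                  (((n - j).factorial : ℝ≥0∞) * Tt F r (n - j) γ)))
            = ((n.choose j : ℝ≥0∞) * (j.factorial : ℝ≥0∞) * ((n - j).factorial : ℝ≥0∞)) *
                (((j : ℝ≥0∞) + 1) * Uu F r j γ * Tt F r (n - j) γ) := by ring
          _ = (n.factorial : ℝ≥0∞) * (((j : ℝ≥0∞) + 1) * Uu F r j γ * Tt F r (n - j) γ) := by
              rw [hnum]
      rw [Finset.sum_congr rfl hterm, ← Finset.mul_sum, ← P1]
      rw [show ((n+1).factorial : ℝ≥0∞) = (n.factorial : ℝ≥0∞) * ((n : ℝ≥0∞) + 1) by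
        rw [Nat.factorial_succ, Nat.cast_mul]; push_cast; ring]
      ring

end Aux

/-- the sum over labelled rooted trees on `{0,1,…,n}` (encoded by parent
maps, rooted at `0`, with `γ₀` pinned at the root) reorganizes into the sum over planar
rooted trees (other than the root-only tree) of the corresponding weights. -/
theorem stmt17 {P : Type*} [Countable P]
    (F : P → P → ℝ≥0∞) (hFsym : ∀ a b, F a b = F b a)
    (ρ : P → ℝ≥0) (γ₀ : P) :
    (∑' m : ℕ, (((m + 1).factorial : ℝ≥0∞))⁻¹ *
        ∑' τ : {q : Fin (m + 2) → Fin (m + 2) //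
            q 0 = 0 ∧ ∀ v, ∃ k, q^[k] v = 0},
          ∑' g : Fin (m + 1) → P,
            ∏ v : Fin (m + 1),
              F ((Fin.cons γ₀ g : Fin (m + 2) → P) (τ.1 v.succ))
                  ((Fin.cons γ₀ g : Fin (m + 2) → P) v.succ) *
                (ρ (g v) : ℝ≥0∞))
      = ∑' t : {t : PTree // t ≠ PTree.node []},
          treeW2 F (fun γ => (ρ γ : ℝ≥0∞)) t.1 γ₀ := by
  set r : P → ℝ≥0∞ := fun γ => (ρ γ : ℝ≥0∞) with hr
  have h1 : (∑' m : ℕ, (((m + 1).factorial : ℝ≥0∞))⁻¹ *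
        ∑' τ : {q : Fin (m + 2) → Fin (m + 2) //
            q 0 = 0 ∧ ∀ v, ∃ k, q^[k] v = 0},
          ∑' g : Fin (m + 1) → P,
            ∏ v : Fin (m + 1),
              F ((Fin.cons γ₀ g : Fin (m + 2) → P) (τ.1 v.succ))
                  ((Fin.cons γ₀ g : Fin (m + 2) → P) v.succ) *
                (ρ (g v) : ℝ≥0∞))
      = ∑' m : ℕ, (((m + 1).factorial : ℝ≥0∞))⁻¹ * A F r (m + 1) γ₀ := rfl
  rw [h1]
  have h2 : ∀ m : ℕ, (((m + 1).factorial : ℝ≥0∞))⁻¹ * A F r (m + 1) γ₀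
      = Tt F r (m + 1) γ₀ := by
    intro m
    rw [main_lemma, ← mul_assoc, ENNReal.inv_mul_cancel, one_mul]
    · exact Nat.cast_ne_zero.mpr (Nat.factorial_ne_zero _)
    · exact ENNReal.natCast_ne_top _
  rw [tsum_congr h2]
  have h3 : ∀ n γ, Tt F r n γ = ∑' x : {t : PTree // nvv t = n}, treeW2 F r x.1 γ := by
    intro n γ
    calc Tt F r n γ
        = ∑' t : PTree, Set.indicator {t : PTree | nvv t = n}
            (fun t => treeW2 F r t γ) t := by
          rw [Tt]
          exact tsum_congr (fun t => by rw [Set.indicator_apply]; rfl)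
      _ = ∑' x : ({t : PTree | nvv t = n} : Set PTree), treeW2 F r x.1 γ :=
          (_root_.tsum_subtype _ _).symm
      _ = ∑' x : {t : PTree // nvv t = n}, treeW2 F r x.1 γ := rfl
  rw [tsum_congr (fun m => h3 (m + 1) γ₀)]
  let E : ((m : ℕ) × {t : PTree // nvv t = m + 1}) ≃ {t : PTree // t ≠ PTree.node []} :=
    { toFun := fun x => ⟨x.2.1, by
        intro he
        have h := x.2.2
        rw [he, (nvv_eq_zero _).mpr rfl] at h
        omega⟩
      invFun := fun x => ⟨nvv x.1 - 1, ⟨x.1, by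
        have h : nvv x.1 ≠ 0 := fun h0 => x.2 ((nvv_eq_zero _).mp h0)
        omega⟩⟩
      left_inv := by
        rintro ⟨m, t, h⟩
        have hm : nvv t - 1 = m := by omega
        subst hm
        rfl
      right_inv := fun x => rfl }
  rw [← Equiv.tsum_eq E (fun t => treeW2 F r t.1 γ₀), ENNReal.tsum_sigma']
  exact tsum_congr fun a => tsum_congr fun b => rfl

end
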